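/- For every unit c of ℤ/p^kℤ, one has the identity 2·Σ a² = (p+1)·p^{k−1}·c in ℤ/p^kℤ, where the sum runs over all pairs (a, b) ∈ (ℤ/p^kℤ)² satisfying a² − εb² = c. -/

import Mathlib

open Finset
set_option linter.unusedSectionVars false

section PrimeField

variable {p : ℕ} [hp : Fact p.Prime]

private lemma char_ne_two' (hodd : Odd p) : ringChar (ZMod p) ≠ 2 := by
  rw [ZMod.ringChar_zmod_n]
  rintro rfl
  simp [Nat.odd_iff] at hodd

private lemma sum_char_shift (hodd : Odd p) {c : ZMod p} (hc : c ≠ 0) :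
    ∑ s : ZMod p, quadraticChar (ZMod p) s * quadraticChar (ZMod p) (s - c) = -1 := by
  classical
  have hF := char_ne_two' hodd
  have h0 : ∑ s : ZMod p, quadraticChar (ZMod p) s * quadraticChar (ZMod p) (s - c)
      = ∑ s ∈ univ.erase (0 : ZMod p),
          quadraticChar (ZMod p) s * quadraticChar (ZMod p) (s - c) := by
    rw [← Finset.add_sum_erase _ _ (mem_univ (0 : ZMod p))]
    simp
  rw [h0]
  have h1 : ∀ s ∈ univ.erase (0 : ZMod p),
      quadraticChar (ZMod p) s * quadraticChar (ZMod p) (s - c)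
        = quadraticChar (ZMod p) (1 - c * s⁻¹) := by
    intro s hs
    have hs0 : s ≠ 0 := (Finset.mem_erase.mp hs).1
    have : s - c = s * (1 - c * s⁻¹) := by field_simp
    rw [this, map_mul, ← mul_assoc, ← sq, quadraticChar_sq_one hs0, one_mul]
  rw [Finset.sum_congr rfl h1]
  have h2 : ∑ s ∈ univ.erase (0 : ZMod p), quadraticChar (ZMod p) (1 - c * s⁻¹)
      = ∑ y ∈ univ.erase (1 : ZMod p), quadraticChar (ZMod p) y := by
    apply Finset.sum_nbij' (i := fun s => 1 - c * s⁻¹) (j := fun y => c * (1 - y)⁻¹)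
    · intro s hs
      have hs0 : s ≠ 0 := (Finset.mem_erase.mp hs).1
      refine Finset.mem_erase.mpr ⟨?_, mem_univ _⟩
      intro h
      have : c * s⁻¹ = 0 := by linear_combination -h
      rcases mul_eq_zero.mp this with h' | h'
      · exact hc h'
      · exact hs0 (inv_eq_zero.mp h')
    · intro y hy
      have hy1 : y ≠ 1 := (Finset.mem_erase.mp hy).1
      refine Finset.mem_erase.mpr ⟨?_, mem_univ _⟩
      intro h
      rcases mul_eq_zero.mp h with h' | h'
      · exact hc h'
      · exact sub_ne_zero_of_ne (Ne.symm hy1) (inv_eq_zero.mp h')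
    · intro s hs
      have hs0 : s ≠ 0 := (Finset.mem_erase.mp hs).1
      have h1 : (1 : ZMod p) - (1 - c * s⁻¹) = c * s⁻¹ := by ring
      rw [h1]
      field_simp
    · intro y hy
      have hy1 : y ≠ 1 := (Finset.mem_erase.mp hy).1
      have hy' : (1 : ZMod p) - y ≠ 0 := sub_ne_zero_of_ne (Ne.symm hy1)
      field_simp
      ring
    · intro s hs; rfl
  rw [h2, Finset.sum_erase_eq_sub (mem_univ (1 : ZMod p)), quadraticChar_sum_zero hF,
    map_one]
  ring

end PrimeField

section CountP

variable {p : ℕ} [hp : Fact p.Prime] {ε : ℤ}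

private lemma count_p (hodd : Odd p) (hε : ¬ IsSquare (ε : ZMod p)) {c : ZMod p} (hc : c ≠ 0) :
    #(univ.filter fun v : ZMod p × ZMod p => v.1 ^ 2 - (ε : ZMod p) * v.2 ^ 2 = c) = p + 1 := by
  classical
  have hF := char_ne_two' hodd
  have hε0 : (ε : ZMod p) ≠ 0 := fun h => hε (h ▸ (⟨0, by ring⟩ : IsSquare (0 : ZMod p)))
  have χε : quadraticChar (ZMod p) (ε : ZMod p) = -1 :=
    quadraticChar_neg_one_iff_not_isSquare.mpr hε
  have χεinv : quadraticChar (ZMod p) ((ε : ZMod p)⁻¹) = -1 := by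
    have h1 : quadraticChar (ZMod p) ((ε : ZMod p) * (ε : ZMod p)⁻¹) = 1 := by
      rw [mul_inv_cancel₀ hε0, map_one]
    rw [map_mul, χε] at h1
    linarith
  -- fiberwise over the first coordinate
  set S := univ.filter fun v : ZMod p × ZMod p => v.1 ^ 2 - (ε : ZMod p) * v.2 ^ 2 = c with hS
  have hfib : #S = ∑ a : ZMod p,
      #(univ.filter fun b : ZMod p => b ^ 2 = (a ^ 2 - c) * (ε : ZMod p)⁻¹) := by
    rw [Finset.card_eq_sum_card_fiberwise (f := Prod.fst) (t := univ) (fun x _ => mem_univ _)]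
    refine Finset.sum_congr rfl fun a _ => ?_
    apply Finset.card_nbij' (i := fun v => v.2) (j := fun b => (a, b))
    · intro v hv
      rw [Finset.mem_coe, Finset.mem_filter] at hv
      obtain ⟨hvS, h2⟩ := hv
      rw [hS, Finset.mem_filter] at hvS
      have h1 := hvS.2
      simp only [Finset.mem_coe, Finset.mem_filter, Finset.mem_univ, true_and]
      rw [← h2, eq_mul_inv_iff_mul_eq₀ hε0]
      linear_combination -h1
    · intro b hb
      simp only [Finset.mem_coe, Finset.mem_filter, Finset.mem_univ, true_and] at hb
      rw [eq_mul_inv_iff_mul_eq₀ hε0] at hb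
      rw [Finset.mem_coe, Finset.mem_filter, hS, Finset.mem_filter]
      exact ⟨⟨mem_univ _, by linear_combination -hb⟩, rfl⟩
    · intro v hv
      rw [Finset.mem_coe, Finset.mem_filter] at hv
      exact Prod.ext hv.2.symm rfl
    · intro b hb; rfl
  -- now compute in ℤ
  have key : (#S : ℤ) = p + 1 := by
    rw [hfib]
    push_cast
    have step1 : ∀ a : ZMod p,
        (#(univ.filter fun b : ZMod p => b ^ 2 = (a ^ 2 - c) * (ε : ZMod p)⁻¹) : ℤ)
          = quadraticChar (ZMod p) ((a ^ 2 - c) * (ε : ZMod p)⁻¹) + 1 := by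
      intro a
      rw [← quadraticChar_card_sqrts hF ((a ^ 2 - c) * (ε : ZMod p)⁻¹)]
      congr 1
      congr 1
      ext x
      simp [Set.mem_toFinset]
    rw [Finset.sum_congr rfl fun a _ => step1 a]
    rw [Finset.sum_add_distrib]
    simp only [Finset.sum_const, Finset.card_univ, ZMod.card, nsmul_eq_mul, mul_one]
    have step2 : ∑ a : ZMod p, quadraticChar (ZMod p) ((a ^ 2 - c) * (ε : ZMod p)⁻¹)
        = ∑ a : ZMod p, quadraticChar (ZMod p) (a ^ 2 - c) * quadraticChar (ZMod p) ((ε : ZMod p)⁻¹) := by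
      refine Finset.sum_congr rfl fun a _ => ?_
      rw [map_mul]
    rw [step2, ← Finset.sum_mul, χεinv]
    -- remains: ∑ a, χ (a² − c) = -1
    have step3 : ∑ a : ZMod p, quadraticChar (ZMod p) (a ^ 2 - c) = -1 := by
      have hfib2 : ∑ a : ZMod p, quadraticChar (ZMod p) (a ^ 2 - c)
          = ∑ s : ZMod p, ∑ a ∈ univ.filter (fun a : ZMod p => a ^ 2 = s),
              quadraticChar (ZMod p) (a ^ 2 - c) :=
        (Finset.sum_fiberwise_of_maps_to (g := fun a : ZMod p => a ^ 2)
          (fun x _ => mem_univ _) _).symm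
      rw [hfib2]
      have hin : ∀ s : ZMod p, ∑ a ∈ univ.filter (fun a : ZMod p => a ^ 2 = s),
          quadraticChar (ZMod p) (a ^ 2 - c)
            = (quadraticChar (ZMod p) s + 1) * quadraticChar (ZMod p) (s - c) := by
        intro s
        rw [Finset.sum_congr rfl (fun a ha => by
          rw [(Finset.mem_filter.mp ha).2]), Finset.sum_const, nsmul_eq_mul]
        congr 1
        rw [← quadraticChar_card_sqrts hF s]
        congr 1
        congr 1
        ext x
        simp [Set.mem_toFinset]
      rw [Finset.sum_congr rfl fun s _ => hin s]
      have expand : ∀ s : ZMod p, (quadraticChar (ZMod p) s + 1) * quadraticChar (ZMod p) (s - c)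
          = quadraticChar (ZMod p) s * quadraticChar (ZMod p) (s - c)
            + quadraticChar (ZMod p) (s - c) := fun s => by ring
      rw [Finset.sum_congr rfl fun s _ => expand s, Finset.sum_add_distrib,
        sum_char_shift hodd hc]
      have shift : ∑ s : ZMod p, quadraticChar (ZMod p) (s - c)
          = ∑ y : ZMod p, quadraticChar (ZMod p) y :=
        Fintype.sum_equiv (Equiv.subRight c) _ _ (fun s => rfl)
      rw [shift, quadraticChar_sum_zero hF]
      ring
    rw [step3]
    ring
  exact_mod_cast key

end CountP

section Lift

variable {p : ℕ} [hp : Fact p.Prime] {k : ℕ}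

private def Jf (p k : ℕ) (a : ℕ) : ZMod (p ^ (k + 1)) := ((a * p ^ k : ℕ) : ZMod (p ^ (k + 1)))

private lemma Jf_add (a b : ℕ) : Jf p k a + Jf p k b = Jf p k (a + b) := by
  unfold Jf; push_cast; ring

private lemma Jf_eq_Jf {a b : ℕ} (h : (a : ZMod p) = b) : Jf p k a = Jf p k b := by
  unfold Jf
  rw [ZMod.natCast_eq_natCast_iff] at h ⊢
  rw [pow_succ']
  exact Nat.ModEq.mul_right' _ h

private lemma Jf_inj {a b : ℕ} (h : Jf p k a = Jf p k b) : (a : ZMod p) = b := by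
  unfold Jf at h
  rw [ZMod.natCast_eq_natCast_iff] at h ⊢
  rw [pow_succ'] at h
  exact Nat.ModEq.mul_right_cancel' (pow_ne_zero k hp.out.ne_zero) h

private lemma val_cast_self {n : ℕ} [NeZero n] (x : ZMod n) : ((x.val : ℕ) : ZMod n) = x := by
  rw [ZMod.natCast_val, ZMod.cast_id]

private lemma pi_Jf (a : ℕ) :
    ZMod.castHom (pow_dvd_pow p (Nat.le_succ k)) (ZMod (p ^ k)) (Jf p k a) = 0 := by
  unfold Jf
  rw [map_natCast, Nat.cast_mul, ZMod.natCast_self, mul_zero]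

private lemma exists_Jf {x : ZMod (p ^ (k + 1))}
    (h : ZMod.castHom (pow_dvd_pow p (Nat.le_succ k)) (ZMod (p ^ k)) x = 0) :
    ∃ a : ℕ, x = Jf p k a := by
  have hx : ((x.val : ℕ) : ZMod (p ^ k)) = 0 := by
    rw [← map_natCast (ZMod.castHom (pow_dvd_pow p (Nat.le_succ k)) (ZMod (p ^ k))) x.val,
      val_cast_self, h]
  rw [ZMod.natCast_eq_zero_iff] at hx
  obtain ⟨d, hd⟩ := hx
  refine ⟨d, ?_⟩
  rw [← val_cast_self x, hd]
  unfold Jf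
  congr 1
  ring

private lemma mul_Jf (x : ZMod (p ^ (k + 1))) (a : ℕ) :
    x * Jf p k a = Jf p k (x.val * a) := by
  conv_lhs => rw [← val_cast_self x]
  unfold Jf
  push_cast
  ring

private lemma Jf_mul_Jf (hk : 1 ≤ k) (a b : ℕ) : Jf p k a * Jf p k b = 0 := by
  unfold Jf
  rw [← Nat.cast_mul]
  rw [ZMod.natCast_eq_zero_iff]
  calc (p:ℕ) ^ (k + 1) ∣ p ^ k * p ^ k := by
        rw [← pow_add]; exact pow_dvd_pow p (by omega)
  _ ∣ a * p ^ k * (b * p ^ k) := mul_dvd_mul (dvd_mul_left _ _) (dvd_mul_left _ _)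

private def divJf (p k : ℕ) (x : ZMod (p ^ (k + 1))) : ZMod p := ((x.val / p ^ k : ℕ) : ZMod p)

private lemma divJf_Jf (a : ℕ) : divJf p k (Jf p k a) = (a : ZMod p) := by
  unfold divJf Jf
  rw [ZMod.val_natCast]
  have h1 : a * p ^ k % p ^ (k + 1) = a % p * p ^ k := by
    rw [pow_succ', Nat.mul_mod_mul_right]
  rw [h1, Nat.mul_div_cancel _ (pow_pos hp.out.pos k), ZMod.natCast_mod]

end Lift

section Line

private lemma line_card {p : ℕ} [hp : Fact p.Prime] (α β δ : ZMod p) (h : α ≠ 0 ∨ β ≠ 0) :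
    #(univ.filter fun st : ZMod p × ZMod p => α * st.1 + β * st.2 = δ) = p := by
  classical
  rcases h with hα | hβ
  · refine Eq.trans ?_ (by simp [ZMod.card] : #(univ : Finset (ZMod p)) = p)
    apply Finset.card_nbij' (i := fun st => st.2) (j := fun t => (α⁻¹ * (δ - β * t), t))
    · intro st _; exact mem_univ _
    · intro t _
      simp only [mem_coe, mem_filter, mem_univ, true_and]
      field_simp
      ring
    · intro st hst
      simp only [mem_coe, mem_filter, mem_univ, true_and] at hst
      refine Prod.ext ?_ rfl
      show α⁻¹ * (δ - β * st.2) = st.1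
      field_simp
      linear_combination -hst
    · intro t _; rfl
  · refine Eq.trans ?_ (by simp [ZMod.card] : #(univ : Finset (ZMod p)) = p)
    apply Finset.card_nbij' (i := fun st => st.1) (j := fun s => (s, β⁻¹ * (δ - α * s)))
    · intro st _; exact mem_univ _
    · intro s _
      simp only [mem_coe, mem_filter, mem_univ, true_and]
      field_simp
      ring
    · intro st hst
      simp only [mem_coe, mem_filter, mem_univ, true_and] at hst
      refine Prod.ext rfl ?_
      show β⁻¹ * (δ - α * st.1) = st.2
      field_simp
      linear_combination -hst
    · intro s _; rfl

end Line

section Step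

private lemma count_step {p : ℕ} [hp : Fact p.Prime] (hodd : Odd p) {k : ℕ} (hk : 1 ≤ k)
    (ε : ℤ) (hε : ¬ IsSquare (ε : ZMod p)) (c : ZMod (p ^ (k + 1))) (hc : IsUnit c) :
    #(univ.filter fun v : ZMod (p ^ (k + 1)) × ZMod (p ^ (k + 1)) =>
        v.1 ^ 2 - (ε : ZMod (p ^ (k + 1))) * v.2 ^ 2 = c)
      = p * #(univ.filter fun v : ZMod (p ^ k) × ZMod (p ^ k) =>
          v.1 ^ 2 - (ε : ZMod (p ^ k)) * v.2 ^ 2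
            = ZMod.castHom (pow_dvd_pow p (Nat.le_succ k)) (ZMod (p ^ k)) c) := by
  classical
  set π := ZMod.castHom (pow_dvd_pow p (Nat.le_succ k)) (ZMod (p ^ k)) with hπdef
  set ρ := ZMod.castHom (dvd_pow_self p (Nat.succ_ne_zero k)) (ZMod p) with hρdef
  have rho_val : ∀ x : ZMod (p ^ (k + 1)), ((x.val : ℕ) : ZMod p) = ρ x := fun x => by
    rw [ZMod.natCast_val, hρdef, ZMod.castHom_apply]
  have hε0 : (ε : ZMod p) ≠ 0 := fun h => hε (h ▸ (⟨0, by ring⟩ : IsSquare (0 : ZMod p)))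
  have two_ne : (2 : ZMod p) ≠ 0 := by
    intro h
    have h2 : ((2 : ℕ) : ZMod p) = 0 := by exact_mod_cast h
    rw [ZMod.natCast_eq_zero_iff] at h2
    have := (Nat.prime_dvd_prime_iff_eq hp.out Nat.prime_two).mp h2
    subst this
    simp [Nat.odd_iff] at hodd
  have hmaps : ∀ v ∈ (univ.filter fun v : ZMod (p ^ (k + 1)) × ZMod (p ^ (k + 1)) =>
      v.1 ^ 2 - (ε : ZMod (p ^ (k + 1))) * v.2 ^ 2 = c),
      (π v.1, π v.2) ∈ (univ.filter fun v : ZMod (p ^ k) × ZMod (p ^ k) =>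
        v.1 ^ 2 - (ε : ZMod (p ^ k)) * v.2 ^ 2 = π c) := by
    intro v hv
    rw [mem_filter] at hv ⊢
    refine ⟨mem_univ _, ?_⟩
    have h := congrArg π hv.2
    rw [map_sub, map_mul, map_pow, map_pow, map_intCast] at h
    exact h
  rw [Finset.card_eq_sum_card_fiberwise hmaps]
  have hfib : ∀ w ∈ (univ.filter fun v : ZMod (p ^ k) × ZMod (p ^ k) =>
      v.1 ^ 2 - (ε : ZMod (p ^ k)) * v.2 ^ 2 = π c),
      #((univ.filter fun v : ZMod (p ^ (k + 1)) × ZMod (p ^ (k + 1)) =>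
        v.1 ^ 2 - (ε : ZMod (p ^ (k + 1))) * v.2 ^ 2 = c).filter
          fun v => (π v.1, π v.2) = w) = p := by
    intro w hw
    rw [mem_filter] at hw
    have hw2 := hw.2
    set ta := ((w.1.val : ℕ) : ZMod (p ^ (k + 1))) with hta_def
    set tb := ((w.2.val : ℕ) : ZMod (p ^ (k + 1))) with htb_def
    have hπa : π ta = w.1 := by rw [hta_def, map_natCast, val_cast_self]
    have hπb : π tb = w.2 := by rw [htb_def, map_natCast, val_cast_self]
    have h0 : π (c - (ta ^ 2 - (ε : ZMod (p ^ (k + 1))) * tb ^ 2)) = 0 := by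
      rw [map_sub, map_sub, map_mul, map_pow, map_pow, map_intCast, hπa, hπb, hw2]
      ring
    obtain ⟨d, hd⟩ := exists_Jf h0
    -- hd : c - (ta^2 - ε*tb^2) = Jf p k d
    have key : ∀ s t : ℕ,
        ((ta + Jf p k s) ^ 2 - (ε : ZMod (p ^ (k + 1))) * (tb + Jf p k t) ^ 2 = c)
          ↔ ρ (2 * ta) * (s : ZMod p) + (-(ρ (2 * (ε : ZMod (p ^ (k + 1))) * tb))) * (t : ZMod p)
              = (d : ZMod p) := by
      intro s t
      have e1 := Jf_mul_Jf (p := p) hk s s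
      have e2 := Jf_mul_Jf (p := p) hk t t
      have e3 := mul_Jf (2 * ta) s
      have e4 := mul_Jf (2 * (ε : ZMod (p ^ (k + 1))) * tb) t
      have main : (ta + Jf p k s) ^ 2 - (ε : ZMod (p ^ (k + 1))) * (tb + Jf p k t) ^ 2 - c
          = Jf p k ((2 * ta).val * s)
            - Jf p k (d + (2 * (ε : ZMod (p ^ (k + 1))) * tb).val * t) := by
        rw [← Jf_add, ← e3, ← e4]
        linear_combination -hd + e1 - (ε : ZMod (p ^ (k + 1))) * e2
      constructor
      · intro h
        have h' : Jf p k ((2 * ta).val * s)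
            = Jf p k (d + (2 * (ε : ZMod (p ^ (k + 1))) * tb).val * t) := by
          linear_combination h - main
        have h'' := Jf_inj h'
        push_cast at h''
        rw [rho_val, rho_val] at h''
        linear_combination h''
      · intro h
        have h2 : (((2 * ta).val * s : ℕ) : ZMod p)
            = ((d + (2 * (ε : ZMod (p ^ (k + 1))) * tb).val * t : ℕ) : ZMod p) := by
          push_cast
          rw [rho_val, rho_val]
          linear_combination h
        have hXY := Jf_eq_Jf (k := k) h2
        linear_combination main + hXY
    have hαβ : ρ (2 * ta) ≠ 0 ∨ (-(ρ (2 * (ε : ZMod (p ^ (k + 1))) * tb))) ≠ 0 := by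
      by_contra hcon
      push_neg at hcon
      obtain ⟨h1, h2⟩ := hcon
      rw [neg_eq_zero] at h2
      rw [map_mul, map_ofNat] at h1
      rw [map_mul, map_mul, map_ofNat, map_intCast] at h2
      have hta0 : ρ ta = 0 := by
        rcases mul_eq_zero.mp h1 with h | h
        · exact absurd h two_ne
        · exact h
      have htb0 : ρ tb = 0 := by
        rcases mul_eq_zero.mp h2 with h | h
        · rcases mul_eq_zero.mp h with h' | h'
          · exact absurd h' two_ne
          · exact absurd h' hε0
        · exact h
      have hJd : ρ (Jf p k d) = 0 := by
        unfold Jf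
        rw [map_natCast, Nat.cast_mul, Nat.cast_pow, ZMod.natCast_self,
          zero_pow (by omega : k ≠ 0), mul_zero]
      have hρc : ρ c = 0 := by
        have h := congrArg ρ hd
        rw [map_sub, map_sub, map_mul, map_pow, map_pow, map_intCast, hJd] at h
        linear_combination h + ρ ta * hta0 - (ε : ZMod p) * ρ tb * htb0
      have hu : IsUnit (ρ c) := hc.map ρ
      rw [hρc] at hu
      exact hu.ne_zero rfl
    refine Eq.trans ?_ (line_card (ρ (2 * ta)) (-(ρ (2 * (ε : ZMod (p ^ (k + 1))) * tb))) (d : ZMod p) hαβ)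
    apply Finset.card_nbij' (i := fun v => (divJf p k (v.1 - ta), divJf p k (v.2 - tb)))
        (j := fun st => (ta + Jf p k st.1.val, tb + Jf p k st.2.val))
    · intro v hv
      rw [mem_coe, mem_filter, mem_filter] at hv
      obtain ⟨⟨_, hv1⟩, hv2⟩ := hv
      have hπ1 : π v.1 = w.1 := congrArg Prod.fst hv2
      have hπ2 : π v.2 = w.2 := congrArg Prod.snd hv2
      have hw1 : π (v.1 - ta) = 0 := by rw [map_sub, hπ1, hπa, sub_self]
      have hw2' : π (v.2 - tb) = 0 := by rw [map_sub, hπ2, hπb, sub_self]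
      obtain ⟨e1, he1⟩ := exists_Jf hw1
      obtain ⟨e2, he2⟩ := exists_Jf hw2'
      have hv1' : (ta + Jf p k e1) ^ 2 - (ε : ZMod (p ^ (k + 1))) * (tb + Jf p k e2) ^ 2 = c := by
        rw [← he1, ← he2]
        linear_combination hv1
      have hkey := (key e1 e2).mp hv1'
      rw [mem_coe, mem_filter]
      refine ⟨mem_univ _, ?_⟩
      show ρ (2 * ta) * divJf p k (v.1 - ta) + _ * divJf p k (v.2 - tb) = _
      rw [he1, he2, divJf_Jf, divJf_Jf]
      exact hkey
    · intro st hst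
      rw [mem_coe, mem_filter] at hst
      have hst2 := hst.2
      rw [mem_coe, mem_filter, mem_filter]
      refine ⟨⟨mem_univ _, ?_⟩, ?_⟩
      · apply (key st.1.val st.2.val).mpr
        rw [val_cast_self st.1, val_cast_self st.2]
        exact hst2
      · have hp1 : π (ta + Jf p k st.1.val) = w.1 := by rw [map_add, hπa, pi_Jf, add_zero]
        have hp2 : π (tb + Jf p k st.2.val) = w.2 := by rw [map_add, hπb, pi_Jf, add_zero]
        exact Prod.ext hp1 hp2
    · intro v hv
      rw [mem_coe, mem_filter, mem_filter] at hv
      obtain ⟨⟨_, hv1⟩, hv2⟩ := hv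
      have hπ1 : π v.1 = w.1 := congrArg Prod.fst hv2
      have hπ2 : π v.2 = w.2 := congrArg Prod.snd hv2
      obtain ⟨e1, he1⟩ := exists_Jf (show π (v.1 - ta) = 0 by rw [map_sub, hπ1, hπa, sub_self])
      obtain ⟨e2, he2⟩ := exists_Jf (show π (v.2 - tb) = 0 by rw [map_sub, hπ2, hπb, sub_self])
      show (ta + Jf p k (divJf p k (v.1 - ta)).val, tb + Jf p k (divJf p k (v.2 - tb)).val) = v
      rw [he1, he2, divJf_Jf, divJf_Jf]
      have j1 : Jf p k ((e1 : ZMod p).val) = Jf p k e1 := Jf_eq_Jf (val_cast_self _)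
      have j2 : Jf p k ((e2 : ZMod p).val) = Jf p k e2 := Jf_eq_Jf (val_cast_self _)
      rw [j1, j2]
      refine Prod.ext ?_ ?_
      · show ta + Jf p k e1 = v.1
        linear_combination -he1
      · show tb + Jf p k e2 = v.2
        linear_combination -he2
    · intro st hst
      show (divJf p k (ta + Jf p k st.1.val - ta), divJf p k (tb + Jf p k st.2.val - tb)) = st
      rw [add_sub_cancel_left, add_sub_cancel_left, divJf_Jf, divJf_Jf,
        val_cast_self, val_cast_self]
  rw [Finset.sum_congr rfl hfib, Finset.sum_const, smul_eq_mul, mul_comm]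

end Step

section Count

private lemma count_pow {p : ℕ} [hp : Fact p.Prime] (hodd : Odd p) (ε : ℤ)
    (hε : ¬ IsSquare (ε : ZMod p)) :
    ∀ k, 1 ≤ k → ∀ c : ZMod (p ^ k), IsUnit c →
      #(univ.filter fun v : ZMod (p ^ k) × ZMod (p ^ k) =>
          v.1 ^ 2 - (ε : ZMod (p ^ k)) * v.2 ^ 2 = c) = (p + 1) * p ^ (k - 1) := by
  intro k
  induction k with
  | zero => omega
  | succ k ih =>
    intro _ c hc
    rcases Nat.eq_or_lt_of_le (Nat.one_le_iff_ne_zero.mpr (Nat.succ_ne_zero k)) with h1 | h1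
    · -- k + 1 = 1, i.e. k = 0
      have hk0 : k = 0 := by omega
      subst hk0
      simp only [pow_one, Nat.sub_self, pow_zero, mul_one]
      -- transport along ZMod (p ^ 1) ≃+* ZMod p
      have f := ZMod.ringEquivCongr (pow_one p)
      have hfc : f c ≠ 0 := by
        have : IsUnit (f c) := hc.map (f : ZMod (p ^ 1) →+* ZMod p)
        exact this.ne_zero
      have hcount := count_p hodd hε hfc
      rw [← hcount]
      apply Finset.card_nbij' (i := fun v => (f v.1, f v.2))
          (j := fun w => (f.symm w.1, f.symm w.2))
      · intro v hv
        rw [mem_coe, mem_filter] at hv ⊢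
        refine ⟨mem_univ _, ?_⟩
        have h := congrArg f hv.2
        rw [map_sub, map_mul, map_pow, map_pow, map_intCast] at h
        exact h
      · intro w hw
        rw [mem_coe, mem_filter] at hw ⊢
        refine ⟨mem_univ _, ?_⟩
        have h := congrArg f.symm hw.2
        rw [map_sub, map_mul, map_pow, map_pow, map_intCast] at h
        have : f.symm (f c) = c := f.symm_apply_apply c
        rw [this] at h
        exact h
      · intro v _
        exact Prod.ext (f.symm_apply_apply _) (f.symm_apply_apply _)
      · intro w _
        exact Prod.ext (f.apply_symm_apply _) (f.apply_symm_apply _)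
    · -- k ≥ 1
      have hk : 1 ≤ k := by omega
      have hstep := count_step hodd hk ε hε c hc
      rw [hstep]
      set π := ZMod.castHom (pow_dvd_pow p (Nat.le_succ k)) (ZMod (p ^ k))
      have hc' : IsUnit (π c) := hc.map π
      rw [ih hk (π c) hc']
      obtain ⟨k', rfl⟩ : ∃ k', k = k' + 1 := ⟨k - 1, by omega⟩
      simp only [Nat.add_sub_cancel]
      ring

end Count

section Exist

variable {p : ℕ} [hp : Fact p.Prime] {k : ℕ}

private lemma unit_of_int (z : ℤ) (hz : (z : ZMod p) ≠ 0) : IsUnit (z : ZMod (p ^ k)) := by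
  have hpz : Prime (p : ℤ) := Nat.prime_iff_prime_int.mp hp.out
  have hnd : ¬ (p : ℤ) ∣ z := by
    intro h
    exact hz ((ZMod.intCast_zmod_eq_zero_iff_dvd z p).mpr h)
  have hco : IsCoprime ((p : ℤ) ^ k) z := ((hpz.coprime_iff_not_dvd).mpr hnd).pow_left
  obtain ⟨a, b, hab⟩ := hco
  have := congrArg (fun t : ℤ => (t : ZMod (p ^ k))) hab
  push_cast at this
  rw [show ((p : ZMod (p ^ k)) ^ k = 0) from ?_] at this
  · exact IsUnit.of_mul_eq_one ((b : ℤ) : ZMod (p ^ k)) (by linear_combination this)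
  · rw [← Nat.cast_pow, ZMod.natCast_self]

private lemma unit_of_rho (hk : k ≠ 0) (u : ZMod (p ^ k))
    (h : ZMod.castHom (dvd_pow_self p hk) (ZMod p) u ≠ 0) : IsUnit u := by
  rw [← val_cast_self u, ZMod.isUnit_iff_coprime]
  apply Nat.Coprime.pow_right
  rw [Nat.coprime_comm, hp.out.coprime_iff_not_dvd]
  intro hdvd
  apply h
  have : ((u.val : ℕ) : ZMod p) = 0 := (ZMod.natCast_eq_zero_iff _ _).mpr hdvd
  calc ZMod.castHom (dvd_pow_self p hk) (ZMod p) u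
      = ZMod.castHom (dvd_pow_self p hk) (ZMod p) ((u.val : ℕ) : ZMod (p ^ k)) := by
        rw [val_cast_self]
  _ = ((u.val : ℕ) : ZMod p) := by rw [map_natCast]
  _ = 0 := this

private lemma sq_lift (hodd : Odd p) (hk : k ≠ 0) (u : (ZMod (p ^ k))ˣ)
    (h : IsSquare (ZMod.unitsMap (dvd_pow_self p hk) u)) : IsSquare u := by
  classical
  set φ := ZMod.unitsMap (dvd_pow_self p hk) with hφ
  have hsurj : Function.Surjective φ := ZMod.unitsMap_surjective _
  have hp1 : 2 ≤ p := hp.out.two_le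
  have cardG : Nat.card (ZMod (p ^ k))ˣ = p ^ (k - 1) * (p - 1) := by
    rw [Nat.card_eq_fintype_card, ZMod.card_units_eq_totient,
      Nat.totient_prime_pow hp.out (Nat.pos_of_ne_zero hk)]
  have cardH : Nat.card (ZMod p)ˣ = p - 1 := by
    rw [Nat.card_eq_fintype_card, ZMod.card_units_eq_totient, Nat.totient_prime hp.out]
  have cardQ : Nat.card ((ZMod (p ^ k))ˣ ⧸ φ.ker) = p - 1 := by
    rw [Nat.card_congr (QuotientGroup.quotientKerEquivOfSurjective φ hsurj).toEquiv, cardH]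
  have cardKer : Nat.card φ.ker = p ^ (k - 1) := by
    have h1 := Subgroup.card_eq_card_quotient_mul_card_subgroup φ.ker
    rw [cardG, cardQ] at h1
    have hp2 : 0 < p - 1 := by omega
    have : (p - 1) * p ^ (k - 1) = (p - 1) * Nat.card φ.ker := by
      rw [← h1]; ring
    exact (Nat.eq_of_mul_eq_mul_left hp2 this).symm
  obtain ⟨w, hw⟩ := h
  obtain ⟨v, hv⟩ := hsurj w
  set z := u * (v * v)⁻¹ with hz_def
  have hzker : z ∈ φ.ker := by
    rw [MonoidHom.mem_ker, hz_def, map_mul, map_inv, map_mul, hv, hw]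
    group
  set n := p ^ (k - 1) with hn_def
  have hnodd : Odd n := hodd.pow
  have zn : z ^ n = 1 := by
    have hzn : (⟨z, hzker⟩ : φ.ker) ^ Fintype.card φ.ker = 1 := pow_card_eq_one
    have hcard : Fintype.card φ.ker = n := by
      rw [← Nat.card_eq_fintype_card, cardKer]
    rw [hcard] at hzn
    have := congrArg (Subtype.val) hzn
    simpa using this
  obtain ⟨m, hm⟩ := hnodd
  have hz_sq : z = (z ^ (m + 1)) * (z ^ (m + 1)) := by
    rw [← pow_add]
    have : m + 1 + (m + 1) = n + 1 := by omega
    rw [this, pow_succ, zn, one_mul]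
  have hu : u = z * (v * v) := by
    rw [hz_def]
    group
  refine ⟨z ^ (m + 1) * v, ?_⟩
  calc u = z * (v * v) := hu
  _ = (z ^ (m + 1) * z ^ (m + 1)) * (v * v) := by rw [← hz_sq]
  _ = (z ^ (m + 1) * v) * (z ^ (m + 1) * v) := mul_mul_mul_comm _ _ _ _

private lemma isSquare_lift (hodd : Odd p) (hk : k ≠ 0) (u : ZMod (p ^ k))
    (h1 : IsSquare (ZMod.castHom (dvd_pow_self p hk) (ZMod p) u))
    (h2 : ZMod.castHom (dvd_pow_self p hk) (ZMod p) u ≠ 0) : IsSquare u := by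
  have hu : IsUnit u := unit_of_rho hk u h2
  obtain ⟨w, hw⟩ := h1
  have hw0 : w ≠ 0 := by
    intro h
    rw [h, mul_zero] at hw
    exact h2 hw
  have hφU : ZMod.unitsMap (dvd_pow_self p hk) hu.unit = hw0.isUnit.unit * hw0.isUnit.unit := by
    apply Units.ext
    simp only [ZMod.unitsMap_def, Units.coe_map, Units.val_mul, MonoidHom.coe_coe,
      IsUnit.unit_spec]
    rw [hw]
  have := sq_lift hodd hk hu.unit ⟨_, hφU⟩
  obtain ⟨T, hT⟩ := this
  refine ⟨(T : ZMod (p ^ k)), ?_⟩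
  have := congrArg (Units.val) hT
  rw [Units.val_mul] at this
  rw [← hu.unit_spec]
  exact this

end Exist

section ExistP

variable {p : ℕ} [hp : Fact p.Prime]

private lemma exists_modp (hodd : Odd p) {ε : ℤ} (hε : ¬ IsSquare (ε : ZMod p)) :
    ∃ x y : ZMod p, x ^ 2 = 1 + (ε : ZMod p) * y ^ 2 ∧ y ≠ 0 := by
  classical
  by_contra hcon
  push_neg at hcon
  -- hcon : ∀ x y, x ^ 2 = 1 + ε y ^ 2 → y = 0
  have hε0 : (ε : ZMod p) ≠ 0 := fun h => hε (h ▸ (⟨0, by ring⟩ : IsSquare (0 : ZMod p)))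
  have χε : quadraticChar (ZMod p) (ε : ZMod p) = -1 :=
    quadraticChar_neg_one_iff_not_isSquare.mpr hε
  have step : ∀ n : ZMod p, ¬ IsSquare n → ¬ IsSquare (n + 1) := by
    intro n hn hsq
    have hn0 : n ≠ 0 := fun h => hn (h ▸ (⟨0, by ring⟩ : IsSquare (0 : ZMod p)))
    -- n / ε is a square
    have χn : quadraticChar (ZMod p) n = -1 := quadraticChar_neg_one_iff_not_isSquare.mpr hn
    have hnε : n * (ε : ZMod p)⁻¹ ≠ 0 := by
      apply mul_ne_zero hn0 (inv_ne_zero hε0)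
    have χprod : quadraticChar (ZMod p) (n * (ε : ZMod p)⁻¹) = 1 := by
      rw [map_mul, χn]
      have h1 : quadraticChar (ZMod p) ((ε : ZMod p) * (ε : ZMod p)⁻¹) = 1 := by
        rw [mul_inv_cancel₀ hε0, map_one]
      rw [map_mul, χε] at h1
      linarith
    obtain ⟨y, hy⟩ := (quadraticChar_one_iff_isSquare hnε).mp χprod
    have hy0 : y ≠ 0 := by
      intro h
      rw [h, mul_zero] at hy
      exact hnε hy
    obtain ⟨x, hx⟩ := hsq
    have : x ^ 2 = 1 + (ε : ZMod p) * y ^ 2 := by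
      have hn_eq : n = (ε : ZMod p) * y ^ 2 := by
        have : n * (ε : ZMod p)⁻¹ * (ε : ZMod p) = y * y * (ε : ZMod p) := by rw [hy]
        field_simp at this
        linear_combination this
      linear_combination -hx + hn_eq
    exact hy0 (hcon x y this)
  have all : ∀ m : ℕ, ¬ IsSquare ((ε : ZMod p) + m) := by
    intro m
    induction m with
    | zero => simpa using hε
    | succ m ih =>
      have : ((ε : ZMod p) + (m + 1 : ℕ)) = ((ε : ZMod p) + m) + 1 := by push_cast; ring
      rw [this]
      exact step _ ih
  have := all ((1 - (ε : ZMod p)).val)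
  rw [val_cast_self] at this
  exact this ⟨1, by ring⟩

private lemma exists_norm_one {k : ℕ} (hodd : Odd p) (hk : 1 ≤ k) {ε : ℤ}
    (hε : ¬ IsSquare (ε : ZMod p)) :
    ∃ x y : ZMod (p ^ k), x ^ 2 - (ε : ZMod (p ^ k)) * y ^ 2 = 1 ∧ IsUnit y := by
  classical
  have hk0 : k ≠ 0 := by omega
  set ρ := ZMod.castHom (dvd_pow_self p hk0) (ZMod p) with hρdef
  have hε0 : (ε : ZMod p) ≠ 0 := fun h => hε (h ▸ (⟨0, by ring⟩ : IsSquare (0 : ZMod p)))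
  obtain ⟨x₀, y₀, hxy₀, hy₀⟩ := exists_modp hodd hε
  by_cases hx₀ : x₀ = 0
  · -- ε y₀² = -1 mod p; take x = 0, y² = -ε⁻¹
    have hεy : (ε : ZMod p) * y₀ ^ 2 = -1 := by
      rw [hx₀] at hxy₀
      linear_combination -hxy₀
    have hεu : IsUnit ((ε : ℤ) : ZMod (p ^ k)) := unit_of_int ε hε0
    set u := -(↑hεu.unit⁻¹ : ZMod (p ^ k)) with hu_def
    have hεunit : (ε : ZMod (p ^ k)) * (↑hεu.unit⁻¹ : ZMod (p ^ k)) = 1 := by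
      exact hεu.mul_val_inv
    have hρu : ρ u = y₀ ^ 2 := by
      have h1 : ρ ((ε : ZMod (p ^ k)) * (↑hεu.unit⁻¹ : ZMod (p ^ k))) = 1 := by
        rw [hεunit, map_one]
      rw [map_mul, map_intCast] at h1
      rw [hu_def, map_neg]
      -- (ε:ZMod p) * ρ(ε⁻¹) = 1 and ε y₀² = -1 ⇒ -ρ(ε⁻¹) = y₀²
      have h2 : (ε : ZMod p) * (-(ρ (↑hεu.unit⁻¹ : ZMod (p ^ k)))) = (ε : ZMod p) * y₀ ^ 2 := by
        rw [hεy]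
        linear_combination -h1
      exact mul_left_cancel₀ hε0 h2
    have hsq : IsSquare u := by
      apply isSquare_lift hodd hk0 u
      · rw [hρu]; exact ⟨y₀, by ring⟩
      · rw [hρu]; exact pow_ne_zero 2 hy₀
    obtain ⟨y, hy⟩ := hsq
    refine ⟨0, y, ?_, ?_⟩
    · have : (ε : ZMod (p ^ k)) * u = -1 := by
        rw [hu_def]
        rw [mul_neg, hεunit]
      rw [hy] at this
      linear_combination -this
    · apply isUnit_of_mul_isUnit_left (y := y)
      rw [← hy, hu_def]
      exact (hεu.unit⁻¹).isUnit.neg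
  · -- x₀ ≠ 0 : take y = lift of y₀, x = sqrt of 1 + ε y²
    set Y := ((y₀.val : ℕ) : ZMod (p ^ k)) with hY_def
    have hρY : ρ Y = y₀ := by rw [hY_def, map_natCast, val_cast_self]
    set u := 1 + (ε : ZMod (p ^ k)) * Y ^ 2 with hu_def
    have hρu : ρ u = x₀ ^ 2 := by
      rw [hu_def, map_add, map_one, map_mul, map_pow, map_intCast, hρY, hxy₀]
    have hsq : IsSquare u := by
      apply isSquare_lift hodd hk0 u
      · rw [hρu]; exact ⟨x₀, by ring⟩
      · rw [hρu]; exact pow_ne_zero 2 hx₀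
    obtain ⟨x, hx⟩ := hsq
    refine ⟨x, Y, ?_, ?_⟩
    · rw [hu_def] at hx
      linear_combination -hx
    · apply unit_of_rho hk0
      rw [hρY]
      exact hy₀

end ExistP

section Main

private lemma reindex {n : ℕ} [NeZero n] (ε : ℤ) (c : ZMod n) {x y : ZMod n}
    (hxy : x ^ 2 - (ε : ZMod n) * y ^ 2 = 1) (f : ZMod n × ZMod n → ZMod n) :
    ∑ v ∈ univ.filter (fun v : ZMod n × ZMod n => v.1 ^ 2 - (ε : ZMod n) * v.2 ^ 2 = c),
      f (x * v.1 + (ε : ZMod n) * y * v.2, y * v.1 + x * v.2)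
      = ∑ v ∈ univ.filter (fun v : ZMod n × ZMod n => v.1 ^ 2 - (ε : ZMod n) * v.2 ^ 2 = c),
          f v := by
  classical
  apply Finset.sum_nbij'
    (i := fun v => (x * v.1 + (ε : ZMod n) * y * v.2, y * v.1 + x * v.2))
    (j := fun v => (x * v.1 - (ε : ZMod n) * y * v.2, -(y * v.1) + x * v.2))
  · intro v hv
    rw [mem_filter] at hv ⊢
    refine ⟨mem_univ _, ?_⟩
    have h := hv.2
    linear_combination (v.1 ^ 2 - (ε : ZMod n) * v.2 ^ 2) * hxy + h
  · intro v hv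
    rw [mem_filter] at hv ⊢
    refine ⟨mem_univ _, ?_⟩
    have h := hv.2
    linear_combination (v.1 ^ 2 - (ε : ZMod n) * v.2 ^ 2) * hxy + h
  · intro v _
    refine Prod.ext ?_ ?_
    · show x * (x * v.1 + (ε : ZMod n) * y * v.2) - (ε : ZMod n) * y * (y * v.1 + x * v.2) = v.1
      linear_combination v.1 * hxy
    · show -(y * (x * v.1 + (ε : ZMod n) * y * v.2)) + x * (y * v.1 + x * v.2) = v.2
      linear_combination v.2 * hxy
  · intro v _
    refine Prod.ext ?_ ?_
    · show x * (x * v.1 - (ε : ZMod n) * y * v.2) + (ε : ZMod n) * y * (-(y * v.1) + x * v.2) = v.1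
      linear_combination v.1 * hxy
    · show y * (x * v.1 - (ε : ZMod n) * y * v.2) + x * (-(y * v.1) + x * v.2) = v.2
      linear_combination v.2 * hxy
  · intro v _
    rfl

/-- For every unit `c` of `ℤ/p^kℤ`, one has `2·Σ a² = (p+1)·p^(k-1)·c` in `ℤ/p^kℤ`, where the
sum runs over all pairs `(a, b) ∈ (ℤ/p^kℤ)²` with `a² − εb² = c`. -/
theorem sum_sq_fst_eq (p k : ℕ) [hp : Fact p.Prime] (hodd : Odd p) (hk : 1 ≤ k)
    (ε : ℤ) (hε : ¬ IsSquare (ε : ZMod p)) (c : (ZMod (p ^ k))ˣ) :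
    2 * ∑ v ∈ Finset.univ.filter
        (fun v : ZMod (p ^ k) × ZMod (p ^ k) =>
          v.1 ^ 2 - (ε : ZMod (p ^ k)) * v.2 ^ 2 = (c : ZMod (p ^ k))), v.1 ^ 2
      = (((p + 1) * p ^ (k - 1) : ℕ) : ZMod (p ^ k)) * (c : ZMod (p ^ k)) := by
  classical
  have hε0 : (ε : ZMod p) ≠ 0 := fun h => hε (h ▸ (⟨0, by ring⟩ : IsSquare (0 : ZMod p)))
  set S := Finset.univ.filter
      (fun v : ZMod (p ^ k) × ZMod (p ^ k) =>
        v.1 ^ 2 - (ε : ZMod (p ^ k)) * v.2 ^ 2 = (c : ZMod (p ^ k))) with hS_def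
  set A := ∑ v ∈ S, v.1 ^ 2 with hA_def
  set B := ∑ v ∈ S, v.2 ^ 2 with hB_def
  obtain ⟨x, y, hxy, hy⟩ := exists_norm_one hodd hk hε
  have hxy' : x ^ 2 - (ε : ZMod (p ^ k)) * (-y) ^ 2 = 1 := by linear_combination hxy
  have h1 : ∑ v ∈ S, (x * v.1 + (ε : ZMod (p ^ k)) * y * v.2) ^ 2 = A :=
    reindex ε (c : ZMod (p ^ k)) hxy (fun v => v.1 ^ 2)
  have h2 : ∑ v ∈ S, (x * v.1 + (ε : ZMod (p ^ k)) * (-y) * v.2) ^ 2 = A :=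
    reindex ε (c : ZMod (p ^ k)) hxy' (fun v => v.1 ^ 2)
  have hsum : A + A = 2 * x ^ 2 * A + 2 * (ε : ZMod (p ^ k)) ^ 2 * y ^ 2 * B := by
    calc A + A
        = ∑ v ∈ S, ((x * v.1 + (ε : ZMod (p ^ k)) * y * v.2) ^ 2
            + (x * v.1 + (ε : ZMod (p ^ k)) * (-y) * v.2) ^ 2) := by
          rw [Finset.sum_add_distrib, h1, h2]
    _ = ∑ v ∈ S, (2 * x ^ 2 * v.1 ^ 2 + 2 * (ε : ZMod (p ^ k)) ^ 2 * y ^ 2 * v.2 ^ 2) := by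
          refine Finset.sum_congr rfl fun v _ => ?_
          ring
    _ = 2 * x ^ 2 * A + 2 * (ε : ZMod (p ^ k)) ^ 2 * y ^ 2 * B := by
          rw [Finset.sum_add_distrib, hA_def, hB_def, ← Finset.mul_sum, ← Finset.mul_sum]
  -- deduce A + ε B = 0
  have h2u : IsUnit ((2 : ℤ) : ZMod (p ^ k)) := by
    apply unit_of_int
    intro h
    have h2' : ((2 : ℕ) : ZMod p) = 0 := by exact_mod_cast h
    rw [ZMod.natCast_eq_zero_iff] at h2'
    have := (Nat.prime_dvd_prime_iff_eq hp.out Nat.prime_two).mp h2'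
    subst this
    simp [Nat.odd_iff] at hodd
  have hεu : IsUnit ((ε : ℤ) : ZMod (p ^ k)) := unit_of_int ε hε0
  have hkey : 2 * (ε : ZMod (p ^ k)) * y ^ 2 * (A + (ε : ZMod (p ^ k)) * B) = 0 := by
    linear_combination -hsum - 2 * A * hxy
  have huu : IsUnit (2 * (ε : ZMod (p ^ k)) * y ^ 2) := by
    refine (?_ : IsUnit _).mul (hy.pow 2)
    refine IsUnit.mul ?_ hεu
    exact_mod_cast h2u
  have hAB : A + (ε : ZMod (p ^ k)) * B = 0 := by
    have := huu.mul_right_eq_zero.mp hkey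
    exact this
  -- sum of the defining equation
  have hsum2 : A - (ε : ZMod (p ^ k)) * B
      = ((#S : ℕ) : ZMod (p ^ k)) * (c : ZMod (p ^ k)) := by
    rw [hA_def, hB_def, Finset.mul_sum, ← Finset.sum_sub_distrib]
    rw [Finset.sum_congr rfl (fun v hv => (Finset.mem_filter.mp hv).2)]
    rw [Finset.sum_const, nsmul_eq_mul]
  have hcount : #S = (p + 1) * p ^ (k - 1) :=
    count_pow hodd ε hε k hk (c : ZMod (p ^ k)) c.isUnit
  rw [hcount] at hsum2
  linear_combination hAB + hsum2

end Main
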